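/- arXiv:2305.02406 — 2 statements merged into one kernel-verified Lean document; each statement's English description precedes it below -/
import Mathlib

section
/- Let G be a graph on [n] and 1 ≤ k ≤ ⌊n/2⌋. Then the multiset of eigenvalues of L_{k−1}(G) is contained (with multiplicities) in the multiset of eigenvalues of L_k(G), where L_j(G) is the Laplacian of the j-th token graph F_j(G). -/
open Finset

/-- The `k`-th token graph of a graph `G` on `[n]` = `Fin n`: vertices are the `k`-subsets of
`[n]`, and `A, B` are adjacent iff `|A ∩ B| = k - 1` and `A △ B` is an edge of `G`. -/
def tokenGraph (n k : ℕ) (G : SimpleGraph (Fin n)) :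
    SimpleGraph {s : Finset (Fin n) // s.card = k} :=
  SimpleGraph.fromRel (fun A B =>
    (A.1 ∩ B.1).card = k - 1 ∧ ∃ u v, G.Adj u v ∧ symmDiff A.1 B.1 = {u, v})

noncomputable instance (n k : ℕ) (G : SimpleGraph (Fin n)) :
    DecidableRel (tokenGraph n k G).Adj := Classical.decRel _

namespace TokenAux

open Matrix
open scoped Classical

variable {n : ℕ} {G : SimpleGraph (Fin n)}

/-- swap one element of a finset -/
lemma mem_swap {s : Finset (Fin n)} {u v x : Fin n} :
    x ∈ insert v (s.erase u) ↔ x = v ∨ (x ≠ u ∧ x ∈ s) := by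
  simp [Finset.mem_insert, Finset.mem_erase]

lemma card_swap {s : Finset (Fin n)} {u v : Fin n} (hu : u ∈ s) (hv : v ∉ s) :
    (insert v (s.erase u)).card = s.card := by
  rw [Finset.card_insert_of_notMem (fun h => hv (Finset.erase_subset _ _ h)),
    Finset.card_erase_add_one hu]

lemma swap_inj {s : Finset (Fin n)} {u v u' v' : Fin n} (hu : u ∈ s) (hv : v ∉ s)
    (hu' : u' ∈ s) (hv' : v' ∉ s)
    (h : insert v (s.erase u) = insert v' (s.erase u')) : u = u' ∧ v = v' := by
  have hvv : v = v' := by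
    have := (Finset.ext_iff.1 h v).1 (by simp)
    rw [mem_swap] at this
    rcases this with h1 | h1
    · exact h1
    · exact absurd h1.2 hv
  refine ⟨?_, hvv⟩
  by_contra huu
  have hmem : u ∈ insert v' (s.erase u') := by
    rw [mem_swap]; exact Or.inr ⟨huu, hu⟩
  rw [← h, mem_swap] at hmem
  rcases hmem with h1 | h1
  · exact hv (h1 ▸ hu)
  · exact h1.1 rfl

lemma adj_iff {j : ℕ} {A B : {s : Finset (Fin n) // s.card = j}} :
    (tokenGraph n j G).Adj A B ↔
      ∃ u v, G.Adj u v ∧ u ∈ A.1 ∧ v ∉ A.1 ∧ B.1 = insert v (A.1.erase u) := by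
  constructor
  · rintro h
    rw [tokenGraph, SimpleGraph.fromRel_adj] at h
    obtain ⟨hne, h | h⟩ := h <;>
    [skip; rw [Finset.inter_comm, symmDiff_comm] at h] <;>
    · obtain ⟨hcard, u, v, huv, hsd⟩ := h
      have hA := A.2
      have hB := B.2
      have hAB : A.1 ≠ B.1 := fun hh => hne (Subtype.ext hh)
      have hj : 1 ≤ j := by
        rcases Nat.eq_zero_or_pos j with hj | hj
        · exact absurd (by rw [Finset.card_eq_zero.1 (hA.trans hj),
            Finset.card_eq_zero.1 (hB.trans hj)]) hAB
        · exact hj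
      have h1 : (A.1 \ B.1).card = 1 := by
        have := Finset.card_inter_add_card_sdiff A.1 B.1
        omega
      have h2 : (B.1 \ A.1).card = 1 := by
        have := Finset.card_inter_add_card_sdiff B.1 A.1
        rw [Finset.inter_comm] at this
        omega
      obtain ⟨a, ha⟩ := Finset.card_eq_one.1 h1
      obtain ⟨b, hb⟩ := Finset.card_eq_one.1 h2
      have haA : a ∈ A.1 ∧ a ∉ B.1 := by
        have : a ∈ A.1 \ B.1 := ha ▸ Finset.mem_singleton_self a
        exact ⟨(Finset.mem_sdiff.1 this).1, (Finset.mem_sdiff.1 this).2⟩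
      have hbB : b ∈ B.1 ∧ b ∉ A.1 := by
        have : b ∈ B.1 \ A.1 := hb ▸ Finset.mem_singleton_self b
        exact ⟨(Finset.mem_sdiff.1 this).1, (Finset.mem_sdiff.1 this).2⟩
      have hBeq : B.1 = insert b (A.1.erase a) := by
        ext x
        have hxA : x ∈ A.1 ∧ x ∉ B.1 ↔ x = a := by
          rw [← Finset.mem_sdiff, ha, Finset.mem_singleton]
        have hxB : x ∈ B.1 ∧ x ∉ A.1 ↔ x = b := by
          rw [← Finset.mem_sdiff, hb, Finset.mem_singleton]
        rw [mem_swap]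
        constructor
        · intro hx
          by_cases hxa : x ∈ A.1
          · exact Or.inr ⟨fun hh => (hxA.2 hh).2 hx, hxa⟩
          · exact Or.inl (hxB.1 ⟨hx, hxa⟩)
        · rintro (rfl | ⟨hxa, hxA'⟩)
          · exact hbB.1
          · by_contra hxB'
            exact hxa (hxA.1 ⟨hxA', hxB'⟩)
      have hsd' : symmDiff A.1 B.1 = {a, b} := by
        rw [symmDiff_def, Finset.sup_eq_union, ha, hb]
        rfl
      have hpair : ({u, v} : Finset (Fin n)) = {a, b} := hsd ▸ hsd'
      have huab : u = a ∨ u = b := by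
        have : u ∈ ({a, b} : Finset (Fin n)) := hpair ▸ (by simp)
        simpa using this
      have hvab : v = a ∨ v = b := by
        have : v ∈ ({a, b} : Finset (Fin n)) := hpair ▸ (by simp)
        simpa using this
      have hab : a ≠ b := fun hh => hbB.2 (hh ▸ haA.1)
      have huv' : u ≠ v := huv.ne
      rcases huab with rfl | rfl
      · rcases hvab with rfl | rfl
        · exact absurd rfl huv'
        · exact ⟨u, v, huv, haA.1, hbB.2, hBeq⟩
      · rcases hvab with rfl | rfl
        · exact ⟨v, u, huv.symm, haA.1, hbB.2, hBeq⟩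
        · exact absurd rfl huv'
  · rintro ⟨u, v, huv, hu, hv, hB⟩
    rw [tokenGraph, SimpleGraph.fromRel_adj]
    have hAB : A ≠ B := by
      intro hh
      rw [← hh] at hB
      exact hv (hB ▸ Finset.mem_insert_self v _)
    refine ⟨hAB, Or.inl ⟨?_, u, v, huv, ?_⟩⟩
    · have hint : A.1 ∩ B.1 = A.1.erase u := by
        ext x
        rw [Finset.mem_inter, hB, mem_swap, Finset.mem_erase]
        constructor
        · rintro ⟨hxA, rfl | ⟨hxu, _⟩⟩
          · exact absurd hxA hv
          · exact ⟨hxu, hxA⟩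
        · rintro ⟨hxu, hxA⟩
          exact ⟨hxA, Or.inr ⟨hxu, hxA⟩⟩
      rw [hint, Finset.card_erase_of_mem hu, A.2]
    · ext x
      simp only [Finset.mem_symmDiff, hB, Finset.mem_insert, Finset.mem_erase,
        Finset.mem_singleton]
      have huv' : u ≠ v := huv.ne
      constructor
      · tauto
      · rintro (rfl | rfl)
        · exact Or.inl ⟨hu, by simp [huv']⟩
        · exact Or.inr ⟨Or.inl rfl, hv⟩

noncomputable def pairs (G : SimpleGraph (Fin n)) (s : Finset (Fin n)) :
    Finset (Fin n × Fin n) :=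
  Finset.univ.filter fun p => G.Adj p.1 p.2 ∧ p.1 ∈ s ∧ p.2 ∉ s

lemma mem_pairs {s : Finset (Fin n)} {p : Fin n × Fin n} :
    p ∈ pairs G s ↔ G.Adj p.1 p.2 ∧ p.1 ∈ s ∧ p.2 ∉ s := by
  simp [pairs]

lemma degree_eq {j : ℕ} (S : {s : Finset (Fin n) // s.card = j}) :
    (tokenGraph n j G).degree S = (pairs G S.1).card := by
  rw [SimpleGraph.degree]
  have : (tokenGraph n j G).neighborFinset S
      = Finset.univ.filter ((tokenGraph n j G).Adj S) := by
    ext x; simp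
  rw [this]
  symm
  refine Finset.card_bij (fun p hp => ⟨insert p.2 (S.1.erase p.1), by
      rw [mem_pairs] at hp
      rw [card_swap hp.2.1 hp.2.2, S.2]⟩) ?_ ?_ ?_
  · intro p hp
    rw [mem_pairs] at hp
    simp only [Finset.mem_filter, Finset.mem_univ, true_and]
    exact adj_iff.2 ⟨p.1, p.2, hp.1, hp.2.1, hp.2.2, rfl⟩
  · intro p hp q hq h
    rw [mem_pairs] at hp hq
    have := swap_inj hp.2.1 hp.2.2 hq.2.1 hq.2.2 (congrArg Subtype.val h)
    exact Prod.ext this.1 this.2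
  · intro S' hS'
    simp only [Finset.mem_filter, Finset.mem_univ, true_and] at hS'
    obtain ⟨u, v, huv, hu, hv, hB⟩ := adj_iff.1 hS'
    exact ⟨(u, v), mem_pairs.2 ⟨huv, hu, hv⟩, Subtype.ext hB.symm⟩

variable {a b : ℕ}

lemma T1_card_subset {S : {s : Finset (Fin n) // s.card = a}}
    {A : {s : Finset (Fin n) // s.card = b}} {w : Fin n}
    (hw : S.1 \ A.1 = {w}) (h : A.1 ⊆ S.1) :
    (Finset.univ.filter fun S' : {s : Finset (Fin n) // s.card = a} =>
        (tokenGraph n a G).Adj S S' ∧ A.1 ⊆ S'.1).card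
      = (Finset.univ.filter fun v => G.Adj w v ∧ v ∉ S.1).card := by
  have hwS : w ∈ S.1 ∧ w ∉ A.1 := by
    have : w ∈ S.1 \ A.1 := hw ▸ Finset.mem_singleton_self w
    exact Finset.mem_sdiff.1 this
  symm
  refine Finset.card_bij (fun v hv => ⟨insert v (S.1.erase w), by
      simp only [Finset.mem_filter] at hv
      rw [card_swap hwS.1 hv.2.2, S.2]⟩) ?_ ?_ ?_
  · intro v hv
    simp only [Finset.mem_filter, Finset.mem_univ, true_and] at hv ⊢
    constructor
    · exact adj_iff.2 ⟨w, v, hv.1, hwS.1, hv.2, rfl⟩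
    · intro y hy
      rw [mem_swap]
      exact Or.inr ⟨fun hh => hwS.2 (hh ▸ hy), h hy⟩
  · intro v hv v' hv' hh
    simp only [Finset.mem_filter, Finset.mem_univ, true_and] at hv hv'
    exact (swap_inj hwS.1 hv.2 hwS.1 hv'.2 (congrArg Subtype.val hh)).2
  · intro S' hS'
    simp only [Finset.mem_filter, Finset.mem_univ, true_and] at hS'
    obtain ⟨hadj, hsub⟩ := hS'
    obtain ⟨u, v, huv, hu, hv, hB⟩ := adj_iff.1 hadj
    have huA : u ∉ A.1 := by
      intro huA
      have : u ∈ S'.1 := hsub huA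
      rw [hB, mem_swap] at this
      rcases this with rfl | ⟨hne, _⟩
      · exact hv hu
      · exact hne rfl
    have huw : u = w := by
      have : u ∈ S.1 \ A.1 := Finset.mem_sdiff.2 ⟨hu, huA⟩
      rw [hw, Finset.mem_singleton] at this
      exact this
    subst huw
    refine ⟨v, ?_, Subtype.ext hB.symm⟩
    simp only [Finset.mem_filter, Finset.mem_univ, true_and]
    exact ⟨huv, hv⟩

lemma T2_card_subset {S : {s : Finset (Fin n) // s.card = a}}
    {A : {s : Finset (Fin n) // s.card = b}} {w : Fin n}
    (hw : S.1 \ A.1 = {w}) (h : A.1 ⊆ S.1) :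
    (Finset.univ.filter fun A' : {s : Finset (Fin n) // s.card = b} =>
        A'.1 ⊆ S.1 ∧ (tokenGraph n b G).Adj A' A).card
      = (Finset.univ.filter fun u => G.Adj u w ∧ u ∈ A.1).card := by
  have hwS : w ∈ S.1 ∧ w ∉ A.1 := by
    have : w ∈ S.1 \ A.1 := hw ▸ Finset.mem_singleton_self w
    exact Finset.mem_sdiff.1 this
  symm
  refine Finset.card_bij (fun u hu => ⟨insert w (A.1.erase u), by
      simp only [Finset.mem_filter] at hu
      rw [card_swap hu.2.2 hwS.2, A.2]⟩) ?_ ?_ ?_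
  · intro u hu
    simp only [Finset.mem_filter, Finset.mem_univ, true_and] at hu ⊢
    constructor
    · intro y hy
      rw [mem_swap] at hy
      rcases hy with rfl | ⟨_, hy2⟩
      · exact hwS.1
      · exact h hy2
    · exact ((adj_iff (G := G)).2 ⟨u, w, hu.1, hu.2, hwS.2, rfl⟩).symm
  · intro u hu u' hu' hh
    simp only [Finset.mem_filter, Finset.mem_univ, true_and] at hu hu'
    exact (swap_inj hu.2 hwS.2 hu'.2 hwS.2 (congrArg Subtype.val hh)).1
  · intro A' hA'
    simp only [Finset.mem_filter, Finset.mem_univ, true_and] at hA'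
    obtain ⟨hsub, hadj⟩ := hA'
    obtain ⟨u, v, huv, hu, hv, hB⟩ := adj_iff.1 hadj.symm
    have hvw : v = w := by
      have hvS : v ∈ S.1 := hsub (hB ▸ Finset.mem_insert_self v _)
      have : v ∈ S.1 \ A.1 := Finset.mem_sdiff.2 ⟨hvS, hv⟩
      rw [hw, Finset.mem_singleton] at this
      exact this
    subst hvw
    refine ⟨u, ?_, Subtype.ext hB.symm⟩
    simp only [Finset.mem_filter, Finset.mem_univ, true_and]
    exact ⟨huv, hu⟩

lemma T1_card_one {S : {s : Finset (Fin n) // s.card = a}}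
    {A : {s : Finset (Fin n) // s.card = b}} {x : Fin n}
    (hx : A.1 \ S.1 = {x}) :
    (Finset.univ.filter fun S' : {s : Finset (Fin n) // s.card = a} =>
        (tokenGraph n a G).Adj S S' ∧ A.1 ⊆ S'.1).card
      = (Finset.univ.filter fun u => G.Adj u x ∧ u ∈ S.1 \ A.1).card := by
  have hxm : x ∈ A.1 ∧ x ∉ S.1 := by
    have : x ∈ A.1 \ S.1 := hx ▸ Finset.mem_singleton_self x
    exact Finset.mem_sdiff.1 this
  symm
  refine Finset.card_bij (fun u hu => ⟨insert x (S.1.erase u), by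
      simp only [Finset.mem_filter, Finset.mem_sdiff] at hu
      rw [card_swap hu.2.2.1 hxm.2, S.2]⟩) ?_ ?_ ?_
  · intro u hu
    simp only [Finset.mem_filter, Finset.mem_univ, Finset.mem_sdiff, true_and] at hu ⊢
    refine ⟨adj_iff.2 ⟨u, x, hu.1, hu.2.1, hxm.2, rfl⟩, ?_⟩
    intro y hy
    rw [mem_swap]
    by_cases hyx : y = x
    · exact Or.inl hyx
    · refine Or.inr ⟨fun hh => hu.2.2 (hh ▸ hy), ?_⟩
      by_contra hyS
      have : y ∈ A.1 \ S.1 := Finset.mem_sdiff.2 ⟨hy, hyS⟩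
      rw [hx, Finset.mem_singleton] at this
      exact hyx this
  · intro u hu u' hu' hh
    simp only [Finset.mem_filter, Finset.mem_univ, Finset.mem_sdiff, true_and] at hu hu'
    exact (swap_inj hu.2.1 hxm.2 hu'.2.1 hxm.2 (congrArg Subtype.val hh)).1
  · intro S' hS'
    simp only [Finset.mem_filter, Finset.mem_univ, true_and] at hS'
    obtain ⟨hadj, hsub⟩ := hS'
    obtain ⟨u, v, huv, hu, hv, hB⟩ := adj_iff.1 hadj
    have hxv : x = v := by
      have : x ∈ S'.1 := hsub hxm.1
      rw [hB, mem_swap] at this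
      rcases this with h1 | h1
      · exact h1
      · exact absurd h1.2 hxm.2
    subst hxv
    have huA : u ∉ A.1 := by
      intro huA
      have : u ∈ S'.1 := hsub huA
      rw [hB, mem_swap] at this
      rcases this with rfl | ⟨hne, _⟩
      · exact hv hu
      · exact hne rfl
    refine ⟨u, ?_, Subtype.ext hB.symm⟩
    simp only [Finset.mem_filter, Finset.mem_univ, Finset.mem_sdiff, true_and]
    exact ⟨huv, hu, huA⟩

lemma T2_card_one {S : {s : Finset (Fin n) // s.card = a}}
    {A : {s : Finset (Fin n) // s.card = b}} {x : Fin n}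
    (hx : A.1 \ S.1 = {x}) :
    (Finset.univ.filter fun A' : {s : Finset (Fin n) // s.card = b} =>
        A'.1 ⊆ S.1 ∧ (tokenGraph n b G).Adj A' A).card
      = (Finset.univ.filter fun v => G.Adj x v ∧ v ∈ S.1 \ A.1).card := by
  have hxm : x ∈ A.1 ∧ x ∉ S.1 := by
    have : x ∈ A.1 \ S.1 := hx ▸ Finset.mem_singleton_self x
    exact Finset.mem_sdiff.1 this
  symm
  refine Finset.card_bij (fun v hv => ⟨insert v (A.1.erase x), by
      simp only [Finset.mem_filter, Finset.mem_sdiff] at hv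
      rw [card_swap hxm.1 hv.2.2.2, A.2]⟩) ?_ ?_ ?_
  · intro v hv
    simp only [Finset.mem_filter, Finset.mem_univ, Finset.mem_sdiff, true_and] at hv ⊢
    constructor
    · intro y hy
      rw [mem_swap] at hy
      rcases hy with rfl | ⟨hyx, hyA⟩
      · exact hv.2.1
      · by_contra hyS
        have : y ∈ A.1 \ S.1 := Finset.mem_sdiff.2 ⟨hyA, hyS⟩
        rw [hx, Finset.mem_singleton] at this
        exact hyx this
    · exact ((adj_iff (G := G)).2 ⟨x, v, hv.1, hxm.1, hv.2.2, rfl⟩).symm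
  · intro v hv v' hv' hh
    simp only [Finset.mem_filter, Finset.mem_univ, Finset.mem_sdiff, true_and] at hv hv'
    exact (swap_inj hxm.1 hv.2.2 hxm.1 hv'.2.2 (congrArg Subtype.val hh)).2
  · intro A' hA'
    simp only [Finset.mem_filter, Finset.mem_univ, true_and] at hA'
    obtain ⟨hsub, hadj⟩ := hA'
    obtain ⟨u, v, huv, hu, hv, hB⟩ := adj_iff.1 hadj.symm
    have hux : u = x := by
      by_contra huu
      have hxA' : x ∈ A'.1 := by
        rw [hB, mem_swap]
        exact Or.inr ⟨fun hh => huu hh.symm, hxm.1⟩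
      exact hxm.2 (hsub hxA')
    subst hux
    have hvS : v ∈ S.1 := hsub (hB ▸ Finset.mem_insert_self v _)
    refine ⟨v, ?_, Subtype.ext hB.symm⟩
    simp only [Finset.mem_filter, Finset.mem_univ, Finset.mem_sdiff, true_and]
    exact ⟨huv, hvS, hv⟩

lemma T1_card_two {S : {s : Finset (Fin n) // s.card = a}}
    {A : {s : Finset (Fin n) // s.card = b}}
    (hx : 2 ≤ (A.1 \ S.1).card) :
    (Finset.univ.filter fun S' : {s : Finset (Fin n) // s.card = a} =>
        (tokenGraph n a G).Adj S S' ∧ A.1 ⊆ S'.1).card = 0 := by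
  rw [Finset.card_eq_zero, Finset.eq_empty_iff_forall_notMem]
  intro S' hS'
  simp only [Finset.mem_filter, Finset.mem_univ, true_and] at hS'
  obtain ⟨hadj, hsub⟩ := hS'
  obtain ⟨u, v, huv, hu, hv, hB⟩ := adj_iff.1 hadj
  have : A.1 \ S.1 ⊆ {v} := by
    intro y hy
    rw [Finset.mem_sdiff] at hy
    have : y ∈ S'.1 := hsub hy.1
    rw [hB, mem_swap] at this
    rcases this with rfl | h1
    · exact Finset.mem_singleton_self _
    · exact absurd h1.2 hy.2
  have := Finset.card_le_card this
  simp only [Finset.card_singleton] at this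
  omega

lemma T2_card_two {S : {s : Finset (Fin n) // s.card = a}}
    {A : {s : Finset (Fin n) // s.card = b}}
    (hx : 2 ≤ (A.1 \ S.1).card) :
    (Finset.univ.filter fun A' : {s : Finset (Fin n) // s.card = b} =>
        A'.1 ⊆ S.1 ∧ (tokenGraph n b G).Adj A' A).card = 0 := by
  rw [Finset.card_eq_zero, Finset.eq_empty_iff_forall_notMem]
  intro A' hA'
  simp only [Finset.mem_filter, Finset.mem_univ, true_and] at hA'
  obtain ⟨hsub, hadj⟩ := hA'
  obtain ⟨u, v, huv, hu, hv, hB⟩ := adj_iff.1 hadj.symm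
  have : A.1 \ S.1 ⊆ {u} := by
    intro y hy
    rw [Finset.mem_sdiff] at hy
    rw [Finset.mem_singleton]
    by_contra hyu
    have : y ∈ A'.1 := by
      rw [hB, mem_swap]
      exact Or.inr ⟨hyu, hy.1⟩
    exact hy.2 (hsub this)
  have := Finset.card_le_card this
  simp only [Finset.card_singleton] at this
  omega

lemma pairs_split_S {s : Finset (Fin n)} {w : Fin n} (hw : w ∉ s) :
    (pairs G (insert w s)).card
      = (Finset.univ.filter fun v => G.Adj w v ∧ v ∉ insert w s).card
        + (Finset.univ.filter fun p : Fin n × Fin n =>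
            G.Adj p.1 p.2 ∧ p.1 ∈ s ∧ p.2 ∉ insert w s).card := by
  have hsplit : pairs G (insert w s)
      = (Finset.univ.filter fun p : Fin n × Fin n =>
          G.Adj p.1 p.2 ∧ p.1 = w ∧ p.2 ∉ insert w s)
        ∪ (Finset.univ.filter fun p : Fin n × Fin n =>
          G.Adj p.1 p.2 ∧ p.1 ∈ s ∧ p.2 ∉ insert w s) := by
    rw [← Finset.filter_or]
    apply Finset.filter_congr
    intro p _
    simp only [Finset.mem_insert]
    constructor
    · rintro ⟨h1, h2 | h2, h3⟩
      · exact Or.inl ⟨h1, h2, h3⟩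
      · exact Or.inr ⟨h1, h2, h3⟩
    · rintro (⟨h1, h2, h3⟩ | ⟨h1, h2, h3⟩)
      · exact ⟨h1, Or.inl h2, h3⟩
      · exact ⟨h1, Or.inr h2, h3⟩
  rw [hsplit, Finset.card_union_of_disjoint]
  · congr 1
    refine Finset.card_bij (fun p hp => p.2) ?_ ?_ ?_
    · intro p hp
      simp only [Finset.mem_filter, Finset.mem_univ, true_and] at hp ⊢
      exact ⟨hp.2.1 ▸ hp.1, hp.2.2⟩
    · intro p hp q hq hh
      simp only [Finset.mem_filter, Finset.mem_univ, true_and] at hp hq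
      exact Prod.ext (hp.2.1.trans hq.2.1.symm) hh
    · intro v hv
      simp only [Finset.mem_filter, Finset.mem_univ, true_and] at hv
      refine ⟨(w, v), ?_, rfl⟩
      simp only [Finset.mem_filter, Finset.mem_univ, true_and]
      tauto
  · rw [Finset.disjoint_left]
    intro p hp hq
    simp only [Finset.mem_filter] at hp hq
    exact hw (hp.2.2.1 ▸ hq.2.2.1)

lemma pairs_split_A {s : Finset (Fin n)} {w : Fin n} (hw : w ∉ s) :
    (pairs G s).card
      = (Finset.univ.filter fun p : Fin n × Fin n =>
            G.Adj p.1 p.2 ∧ p.1 ∈ s ∧ p.2 ∉ insert w s).card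
        + (Finset.univ.filter fun u => G.Adj u w ∧ u ∈ s).card := by
  have hsplit : pairs G s
      = (Finset.univ.filter fun p : Fin n × Fin n =>
          G.Adj p.1 p.2 ∧ p.1 ∈ s ∧ p.2 ∉ insert w s)
        ∪ (Finset.univ.filter fun p : Fin n × Fin n =>
          G.Adj p.1 p.2 ∧ p.1 ∈ s ∧ p.2 = w) := by
    rw [← Finset.filter_or]
    apply Finset.filter_congr
    intro p _
    simp only [Finset.mem_insert, not_or]
    constructor
    · rintro ⟨h1, h2, h3⟩
      by_cases hpw : p.2 = w
      · exact Or.inr ⟨h1, h2, hpw⟩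
      · exact Or.inl ⟨h1, h2, hpw, h3⟩
    · rintro (⟨h1, h2, _, h3⟩ | ⟨h1, h2, h3⟩)
      · exact ⟨h1, h2, h3⟩
      · exact ⟨h1, h2, h3 ▸ hw⟩
  rw [hsplit, Finset.card_union_of_disjoint]
  · congr 1
    refine Finset.card_bij (fun p hp => p.1) ?_ ?_ ?_
    · intro p hp
      simp only [Finset.mem_filter, Finset.mem_univ, true_and] at hp ⊢
      exact ⟨hp.2.2 ▸ hp.1, hp.2.1⟩
    · intro p hp q hq hh
      simp only [Finset.mem_filter, Finset.mem_univ, true_and] at hp hq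
      exact Prod.ext hh (hp.2.2.trans hq.2.2.symm)
    · intro u hu
      simp only [Finset.mem_filter, Finset.mem_univ, true_and] at hu
      refine ⟨(u, w), ?_, rfl⟩
      simp only [Finset.mem_filter, Finset.mem_univ, true_and]
      tauto
  · rw [Finset.disjoint_left]
    intro p hp hq
    simp only [Finset.mem_filter, Finset.mem_insert, not_or] at hp hq
    tauto

noncomputable def incW (n a b : ℕ) :
    Matrix {s : Finset (Fin n) // s.card = a} {s : Finset (Fin n) // s.card = b} ℝ :=
  Matrix.of fun S A => if A.1 ⊆ S.1 then 1 else 0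

theorem lap_comm (G : SimpleGraph (Fin n)) (a b : ℕ) (hba : b + 1 = a) :
    SimpleGraph.lapMatrix ℝ (tokenGraph n a G) * incW n a b
      = incW n a b * SimpleGraph.lapMatrix ℝ (tokenGraph n b G) := by
  ext S A
  have hL : ∀ (j : ℕ) (X Y : {s : Finset (Fin n) // s.card = j}),
      SimpleGraph.lapMatrix ℝ (tokenGraph n j G) X Y
        = (if X = Y then ((tokenGraph n j G).degree X : ℝ) else 0)
          - (if (tokenGraph n j G).Adj X Y then 1 else 0) := by
    intro j X Y
    simp [SimpleGraph.lapMatrix, SimpleGraph.degMatrix, SimpleGraph.adjMatrix,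
      Matrix.diagonal_apply]
  rw [Matrix.mul_apply, Matrix.mul_apply]
  have hLHS : ∑ S', SimpleGraph.lapMatrix ℝ (tokenGraph n a G) S S' * incW n a b S' A
      = (if A.1 ⊆ S.1 then ((tokenGraph n a G).degree S : ℝ) else 0)
        - ((Finset.univ.filter fun S' : {s : Finset (Fin n) // s.card = a} =>
            (tokenGraph n a G).Adj S S' ∧ A.1 ⊆ S'.1).card : ℝ) := by
    have : ∀ S', SimpleGraph.lapMatrix ℝ (tokenGraph n a G) S S' * incW n a b S' A
        = (if S = S' then ((tokenGraph n a G).degree S : ℝ) else 0)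
            * (if A.1 ⊆ S'.1 then 1 else 0)
          - (if (tokenGraph n a G).Adj S S' ∧ A.1 ⊆ S'.1 then 1 else 0) := by
      intro S'
      rw [hL, sub_mul, incW]
      congr 1
      by_cases h1 : (tokenGraph n a G).Adj S S' <;> by_cases h2 : A.1 ⊆ S'.1 <;>
        simp [h1, h2]
    rw [Finset.sum_congr rfl fun S' _ => this S', Finset.sum_sub_distrib]
    congr 1
    · rw [Finset.sum_eq_single S]
      · by_cases h2 : A.1 ⊆ S.1 <;> simp [h2]
      · intro S' _ hne
        simp [Ne.symm hne]
      · intro h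
        exact absurd (Finset.mem_univ S) h
    · rw [Finset.sum_boole]
  have hRHS : ∑ A', incW n a b S A' * SimpleGraph.lapMatrix ℝ (tokenGraph n b G) A' A
      = (if A.1 ⊆ S.1 then ((tokenGraph n b G).degree A : ℝ) else 0)
        - ((Finset.univ.filter fun A' : {s : Finset (Fin n) // s.card = b} =>
            A'.1 ⊆ S.1 ∧ (tokenGraph n b G).Adj A' A).card : ℝ) := by
    have : ∀ A', incW n a b S A' * SimpleGraph.lapMatrix ℝ (tokenGraph n b G) A' A
        = (if A.1 ⊆ S.1 ∧ A' = A then ((tokenGraph n b G).degree A : ℝ) else 0)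
          - (if A'.1 ⊆ S.1 ∧ (tokenGraph n b G).Adj A' A then 1 else 0) := by
      intro A'
      rw [hL, mul_sub, incW]
      congr 1
      · by_cases h1 : A'.1 ⊆ S.1 <;> by_cases h2 : A' = A
        · subst h2; simp [h1]
        · simp [h1, h2]
        · subst h2; simp [h1]
        · simp [h1, h2]
      · by_cases h1 : A'.1 ⊆ S.1 <;> by_cases h2 : (tokenGraph n b G).Adj A' A <;>
          simp [h1, h2]
    rw [Finset.sum_congr rfl fun A' _ => this A', Finset.sum_sub_distrib]
    congr 1
    · rw [Finset.sum_eq_single A]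
      · by_cases h2 : A.1 ⊆ S.1 <;> simp [h2]
      · intro A' _ hne
        simp [hne]
      · intro h
        exact absurd (Finset.mem_univ A) h
    · rw [Finset.sum_boole]
  rw [hLHS, hRHS]
  by_cases hsub : A.1 ⊆ S.1
  · have hcard1 : (S.1 \ A.1).card = 1 := by
      rw [Finset.card_sdiff_of_subset hsub, S.2, A.2]
      omega
    obtain ⟨w, hw⟩ := Finset.card_eq_one.1 hcard1
    have hwm : w ∈ S.1 ∧ w ∉ A.1 := by
      have : w ∈ S.1 \ A.1 := hw ▸ Finset.mem_singleton_self w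
      exact Finset.mem_sdiff.1 this
    have hSw : S.1 = insert w A.1 := by
      ext x
      rw [Finset.mem_insert]
      constructor
      · intro hx
        by_cases hxA : x ∈ A.1
        · exact Or.inr hxA
        · have : x ∈ S.1 \ A.1 := Finset.mem_sdiff.2 ⟨hx, hxA⟩
          rw [hw, Finset.mem_singleton] at this
          exact Or.inl this
      · rintro (rfl | hx)
        · exact hwm.1
        · exact hsub hx
    rw [T1_card_subset hw hsub, T2_card_subset hw hsub, degree_eq, degree_eq,
      if_pos hsub, if_pos hsub]
    have e1 := pairs_split_S (G := G) (s := A.1) (w := w) hwm.2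
    have e2 := pairs_split_A (G := G) (s := A.1) (w := w) hwm.2
    simp only [hSw] at e1 ⊢
    rw [e1, e2]
    push_cast
    ring
  · rw [if_neg hsub, if_neg hsub]
    have hne : (A.1 \ S.1).Nonempty := by
      rw [Finset.sdiff_nonempty]
      exact hsub
    have hpos : 1 ≤ (A.1 \ S.1).card := Finset.card_pos.2 hne
    rcases eq_or_lt_of_le hpos with h1 | h2
    · obtain ⟨x, hx⟩ := Finset.card_eq_one.1 h1.symm
      rw [T1_card_one hx, T2_card_one hx]
      have hfc : (Finset.univ.filter fun u => G.Adj u x ∧ u ∈ S.1 \ A.1)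
          = (Finset.univ.filter fun v => G.Adj x v ∧ v ∈ S.1 \ A.1) := by
        apply Finset.filter_congr
        intro u _
        rw [G.adj_comm]
      rw [hfc]
    · rw [T1_card_two h2, T2_card_two h2]

lemma card_supersets {c : Finset (Fin n)} (hc : c.card ≤ a) :
    (Finset.univ.filter fun S : {s : Finset (Fin n) // s.card = a} => c ⊆ S.1).card
      = (n - c.card).choose (a - c.card) := by
  have hcu : ((Finset.univ : Finset (Fin n)) \ c).card = n - c.card := by
    rw [Finset.card_sdiff_of_subset (Finset.subset_univ c), Finset.card_univ, Fintype.card_fin]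
  rw [← hcu, ← Finset.card_powersetCard]
  refine Finset.card_bij' (fun S _ => S.1 \ c)
    (fun D hD => ⟨D ∪ c, by
      rw [Finset.mem_powersetCard] at hD
      have hdisj : Disjoint D c := (Finset.subset_sdiff.1 hD.1).2
      rw [Finset.card_union_of_disjoint hdisj, hD.2]
      omega⟩) ?_ ?_ ?_ ?_
  · intro S hS
    simp only [Finset.mem_filter] at hS
    rw [Finset.mem_powersetCard]
    constructor
    · exact Finset.sdiff_subset_sdiff (Finset.subset_univ _) Finset.Subset.rfl
    · rw [Finset.card_sdiff_of_subset hS.2, S.2]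
  · intro D _
    simp only [Finset.mem_filter, Finset.mem_univ, true_and]
    exact Finset.subset_union_right
  · intro S hS
    simp only [Finset.mem_filter] at hS
    exact Subtype.ext (Finset.sdiff_union_of_subset hS.2)
  · intro D hD
    rw [Finset.mem_powersetCard] at hD
    have hdisj : Disjoint D c := (Finset.subset_sdiff.1 hD.1).2
    show (D ∪ c) \ c = D
    rw [Finset.union_sdiff_right, Finset.sdiff_eq_self_iff_disjoint.2 hdisj]

lemma card_supersets_zero {c : Finset (Fin n)} (hc : a < c.card) :
    (Finset.univ.filter fun S : {s : Finset (Fin n) // s.card = a} => c ⊆ S.1).card = 0 := by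
  rw [Finset.card_eq_zero, Finset.eq_empty_iff_forall_notMem]
  intro S hS
  simp only [Finset.mem_filter] at hS
  have := Finset.card_le_card hS.2
  rw [S.2] at this
  omega

lemma card_subsets {d : Finset (Fin n)} :
    (Finset.univ.filter fun C : {s : Finset (Fin n) // s.card = b} => C.1 ⊆ d).card
      = d.card.choose b := by
  rw [← Finset.card_powersetCard]
  refine Finset.card_bij (fun C _ => C.1) ?_ ?_ ?_
  · intro C hC
    simp only [Finset.mem_filter] at hC
    rw [Finset.mem_powersetCard]
    exact ⟨hC.2, C.2⟩
  · intro C _ C' _ h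
    exact Subtype.ext h
  · intro D hD
    rw [Finset.mem_powersetCard] at hD
    exact ⟨⟨D, hD.2⟩, by simp only [Finset.mem_filter, Finset.mem_univ, true_and]; exact hD.1, rfl⟩

lemma WtW_apply (A B : {s : Finset (Fin n) // s.card = b}) :
    ((incW n a b)ᵀ * incW n a b) A B
      = ((Finset.univ.filter fun S : {s : Finset (Fin n) // s.card = a} =>
          A.1 ∪ B.1 ⊆ S.1).card : ℝ) := by
  rw [Matrix.mul_apply, ← Finset.sum_boole]
  apply Finset.sum_congr rfl
  intro S _
  simp only [Matrix.transpose_apply, incW, Matrix.of_apply]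
  by_cases h1 : A.1 ⊆ S.1 <;> by_cases h2 : B.1 ⊆ S.1 <;>
    simp [Finset.union_subset_iff, h1, h2]

lemma WWt_apply {c : ℕ} (A B : {s : Finset (Fin n) // s.card = b}) :
    (incW n b c * (incW n b c)ᵀ) A B
      = ((Finset.univ.filter fun C : {s : Finset (Fin n) // s.card = c} =>
          C.1 ⊆ A.1 ∩ B.1).card : ℝ) := by
  rw [Matrix.mul_apply, ← Finset.sum_boole]
  apply Finset.sum_congr rfl
  intro C _
  simp only [Matrix.transpose_apply, incW, Matrix.of_apply]
  by_cases h1 : C.1 ⊆ A.1 <;> by_cases h2 : C.1 ⊆ B.1 <;>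
    simp [Finset.subset_inter_iff, h1, h2]

theorem gottlieb (a b c : ℕ) (hba : b + 1 = a) (hcb : c + 1 = b) (hn : a + b ≤ n) :
    (incW n a b)ᵀ * incW n a b
      = incW n b c * (incW n b c)ᵀ + ((n : ℝ) - 2 * b) • 1 := by
  ext A B
  rw [Matrix.add_apply, WtW_apply, WWt_apply, Matrix.smul_apply, Matrix.one_apply]
  by_cases hAB : A = B
  · subst hAB
    rw [Finset.union_self, Finset.inter_self, card_supersets (by rw [A.2]; omega), A.2,
      card_subsets, A.2, if_pos rfl]
    have h1 : a - b = 1 := by omega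
    have h2 : b.choose c = b := by
      subst hcb
      exact Nat.choose_succ_self_right c
    rw [h1, Nat.choose_one_right, h2, smul_eq_mul, mul_one, Nat.cast_sub (by omega)]
    push_cast
    ring
  · rw [if_neg hAB, smul_zero, add_zero, card_subsets]
    have hAB' : A.1 ≠ B.1 := fun h => hAB (Subtype.ext h)
    have hui : (A.1 ∪ B.1).card + (A.1 ∩ B.1).card = 2 * b := by
      rw [Finset.card_union_add_card_inter, A.2, B.2]
      omega
    have hile : (A.1 ∩ B.1).card < b := by
      by_contra h
      push_neg at h
      have hsub : A.1 ∩ B.1 ⊆ A.1 := Finset.inter_subset_left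
      have : A.1 ∩ B.1 = A.1 := Finset.eq_of_subset_of_card_le hsub (by rw [A.2]; exact h)
      have hAsubB : A.1 ⊆ B.1 := by
        rw [← this]
        exact Finset.inter_subset_right
      exact hAB' (Finset.eq_of_subset_of_card_le hAsubB (by rw [A.2, B.2]))
    rcases eq_or_lt_of_le (Nat.lt_succ_iff.1 (by omega : (A.1 ∩ B.1).card < c + 1)) with h1 | h2
    · -- card inter = c
      have hcu : (A.1 ∪ B.1).card = a := by omega
      rw [card_supersets (by omega : (A.1 ∪ B.1).card ≤ a), hcu]
      simp [h1]
    · rw [card_supersets_zero (by omega : a < (A.1 ∪ B.1).card),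
        Nat.choose_eq_zero_of_lt (by omega)]

theorem incW_posDef (a b : ℕ) (hba : b + 1 = a) (hn : a + b ≤ n) :
    ((incW n a b)ᵀ * incW n a b).PosDef := by
  rcases Nat.eq_zero_or_pos b with rfl | hb
  · have ha : a = 1 := by omega
    subst ha
    have hone : (incW n 1 0)ᵀ * incW n 1 0 = Matrix.diagonal (fun _ => (n : ℝ)) := by
      ext A B
      have hAB : A = B := Subtype.ext
        ((Finset.card_eq_zero.1 A.2).trans (Finset.card_eq_zero.1 B.2).symm)
      subst hAB
      rw [WtW_apply, Matrix.diagonal_apply_eq, Finset.union_self,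
        card_supersets (by rw [A.2]; omega), A.2]
      simp [Nat.choose_one_right]
    rw [hone]
    exact Matrix.PosDef.diagonal fun _ => Nat.cast_pos.2 (by omega)
  · obtain ⟨c, hcb⟩ : ∃ c, c + 1 = b := ⟨b - 1, by omega⟩
    rw [gottlieb a b c hba hcb hn]
    apply Matrix.PosDef.posSemidef_add
    · have := Matrix.posSemidef_self_mul_conjTranspose (incW n b c)
      rwa [Matrix.conjTranspose_eq_transpose_of_trivial] at this
    · have hpos : (0 : ℝ) < (n : ℝ) - 2 * b := by
        have : 2 * b < n := by omega
        push_cast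
        have := (Nat.cast_lt (α := ℝ)).2 this
        push_cast at this
        linarith
      have : ((n : ℝ) - 2 * b) • (1 : Matrix {s : Finset (Fin n) // s.card = b}
          {s : Finset (Fin n) // s.card = b} ℝ)
          = Matrix.diagonal (fun _ => (n : ℝ) - 2 * b) := by
        ext A B
        by_cases hAB : A = B
        · subst hAB; simp
        · simp [Matrix.one_apply_ne hAB, Matrix.diagonal_apply_ne _ hAB]
      rw [this]
      exact Matrix.PosDef.diagonal fun _ => hpos

theorem incW_inj (a b : ℕ) (hba : b + 1 = a) (hn : a + b ≤ n) (x : _)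
    (hx : (incW n a b) *ᵥ x = 0) : x = 0 := by
  by_contra hxne
  have hpd := incW_posDef (n := n) a b hba hn
  have := hpd.dotProduct_mulVec_pos hxne
  rw [← Matrix.mulVec_mulVec, hx, Matrix.mulVec_zero, dotProduct_zero] at this
  exact lt_irrefl 0 this

lemma count_eigen {ι : Type*} [Fintype ι] [DecidableEq ι] {M : Matrix ι ι ℝ}
    (hM : M.IsHermitian) (lam : ℝ) :
    (Finset.univ.filter fun i => lam = hM.eigenvalues i).card
      = Module.finrank ℝ (LinearMap.ker (M - lam • 1).mulVecLin) := by
  have hUU : (hM.eigenvectorUnitary : Matrix ι ι ℝ)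
      * (star (hM.eigenvectorUnitary : Matrix ι ι ℝ)) = 1 :=
    Matrix.mem_unitaryGroup_iff.mp hM.eigenvectorUnitary.2
  have key : M - lam • 1 = (hM.eigenvectorUnitary : Matrix ι ι ℝ)
      * Matrix.diagonal (fun i => hM.eigenvalues i - lam)
      * (star (hM.eigenvectorUnitary : Matrix ι ι ℝ)) := by
    conv_lhs => rw [hM.spectral_theorem, Unitary.conjStarAlgAut_apply]
    have h2 : lam • (1 : Matrix ι ι ℝ) = (hM.eigenvectorUnitary : Matrix ι ι ℝ)
        * (lam • 1) * (star (hM.eigenvectorUnitary : Matrix ι ι ℝ)) := by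
      rw [Matrix.mul_smul, Matrix.mul_one, Matrix.smul_mul, hUU]
    rw [h2, ← Matrix.sub_mul, ← Matrix.mul_sub]
    congr 1
    congr 1
    rw [Matrix.smul_one_eq_diagonal, Matrix.diagonal_sub]
    congr 1
  have hrank : (M - lam • 1).rank
      = Fintype.card {i // hM.eigenvalues i - lam ≠ 0} := by
    conv_lhs => rw [key, ← Unitary.coe_star]
    simp [-isUnit_iff_ne_zero, -Unitary.coe_star, Matrix.rank_diagonal]
  have hrn : (M - lam • 1).rank
      + Module.finrank ℝ (LinearMap.ker (M - lam • 1).mulVecLin)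
      = Fintype.card ι := by
    have := LinearMap.finrank_range_add_finrank_ker (M - lam • 1).mulVecLin
    rw [Module.finrank_pi] at this
    exact this
  have hcount : (Finset.univ.filter fun i => lam = hM.eigenvalues i).card
      + Fintype.card {i // hM.eigenvalues i - lam ≠ 0} = Fintype.card ι := by
    rw [Fintype.card_subtype]
    have : ∀ i, (hM.eigenvalues i - lam ≠ 0) ↔ ¬(lam = hM.eigenvalues i) := by
      intro i
      rw [sub_ne_zero]
      constructor
      · intro h hh
        exact h hh.symm
      · intro h hh
        exact h hh.symm
    rw [Finset.filter_congr fun i _ => this i]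
    exact Finset.card_filter_add_card_filter_not _
  omega

theorem finrank_ker_le (G : SimpleGraph (Fin n)) (a b : ℕ) (hba : b + 1 = a)
    (hn : a + b ≤ n) (lam : ℝ) :
    Module.finrank ℝ (LinearMap.ker
        (SimpleGraph.lapMatrix ℝ (tokenGraph n b G) - lam • 1).mulVecLin)
      ≤ Module.finrank ℝ (LinearMap.ker
        (SimpleGraph.lapMatrix ℝ (tokenGraph n a G) - lam • 1).mulVecLin) := by
  set La := SimpleGraph.lapMatrix ℝ (tokenGraph n a G)
  set Lb := SimpleGraph.lapMatrix ℝ (tokenGraph n b G)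
  set f := (incW n a b).mulVecLin with hf
  have hfinj : Function.Injective f := by
    rw [← LinearMap.ker_eq_bot, LinearMap.ker_eq_bot']
    intro m hm
    exact incW_inj a b hba hn m hm
  have hcomm' : (La - lam • 1) * incW n a b = incW n a b * (Lb - lam • 1) := by
    rw [Matrix.sub_mul, Matrix.mul_sub, lap_comm G a b hba]
    congr 1
    rw [Matrix.smul_mul, Matrix.one_mul, Matrix.mul_smul, Matrix.mul_one]
  have hmap : Submodule.map f (LinearMap.ker (Lb - lam • 1).mulVecLin)
      ≤ LinearMap.ker (La - lam • 1).mulVecLin := by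
    rintro y ⟨x, hx, rfl⟩
    rw [SetLike.mem_coe, LinearMap.mem_ker] at hx
    rw [LinearMap.mem_ker]
    show (La - lam • 1).mulVecLin (incW n a b *ᵥ x) = 0
    rw [Matrix.mulVecLin_apply, Matrix.mulVec_mulVec, hcomm', ← Matrix.mulVec_mulVec]
    rw [Matrix.mulVecLin_apply] at hx
    rw [hx, Matrix.mulVec_zero]
  calc Module.finrank ℝ (LinearMap.ker (Lb - lam • 1).mulVecLin)
      = Module.finrank ℝ (Submodule.map f (LinearMap.ker (Lb - lam • 1).mulVecLin)) :=
        (Submodule.equivMapOfInjective f hfinj _).finrank_eq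
    _ ≤ _ := Submodule.finrank_mono hmap

end TokenAux


/-- Laplacian matrix of the `k`-th token graph. -/
noncomputable def lapTok (n k : ℕ) (G : SimpleGraph (Fin n)) :
    Matrix {s : Finset (Fin n) // s.card = k} {s : Finset (Fin n) // s.card = k} ℝ :=
  SimpleGraph.lapMatrix ℝ (tokenGraph n k G)

/-- The multiset of eigenvalues (with multiplicities) of the Laplacian of the `k`-th token
graph of `G`. -/
noncomputable def evMultiset (n k : ℕ) (G : SimpleGraph (Fin n)) : Multiset ℝ :=
  (Finset.univ.val.map
    (SimpleGraph.posSemidef_lapMatrix ℝ (tokenGraph n k G)).isHermitian.eigenvalues)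

/-- For `1 ≤ k ≤ ⌊n/2⌋`, the multiset of eigenvalues of `L_{k-1}(G)` is contained, with
multiplicities, in the multiset of eigenvalues of `L_k(G)`. -/
theorem evMultiset_le (n k : ℕ) (G : SimpleGraph (Fin n)) (hk : 1 ≤ k) (hkn : k ≤ n / 2) :
    evMultiset n (k - 1) G ≤ evMultiset n k G := by
  classical
  have h2k : 2 * k ≤ n := by
    have := (Nat.le_div_iff_mul_le (by norm_num : 0 < 2)).1 hkn
    omega
  unfold evMultiset
  rw [Multiset.le_iff_count]
  intro lam
  rw [Multiset.count_map, Multiset.count_map]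
  have hM1 := (SimpleGraph.posSemidef_lapMatrix ℝ (tokenGraph n (k - 1) G)).isHermitian
  have hM2 := (SimpleGraph.posSemidef_lapMatrix ℝ (tokenGraph n k G)).isHermitian
  have e1 : (Multiset.filter (fun a => lam = hM1.eigenvalues a) Finset.univ.val).card
      = (Finset.univ.filter fun i => lam = hM1.eigenvalues i).card := by
    rw [← Finset.filter_val]
    rfl
  have e2 : (Multiset.filter (fun a => lam = hM2.eigenvalues a) Finset.univ.val).card
      = (Finset.univ.filter fun i => lam = hM2.eigenvalues i).card := by
    rw [← Finset.filter_val]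
    rfl
  rw [e1, e2, TokenAux.count_eigen hM1 lam, TokenAux.count_eigen hM2 lam]
  exact TokenAux.finrank_ker_le G k (k - 1) (by omega) (by omega) lam
end

section
/- Let G be a graph on n vertices and 2 ≤ k ≤ ⌊n/2⌋. Then the largest eigenvalue of the Laplacian L_k(G) of the k-th token graph is at most (k/(k−1)) times the largest eigenvalue of L_{k−1}(G). -/
open Finset Matrix

/-- The largest eigenvalue of a (symmetric) real matrix. -/
noncomputable def lamMax {V : Type*} [Fintype V] (M : Matrix V V ℝ) : ℝ :=
  sSup {μ : ℝ | ∃ φ : V → ℝ, φ ≠ 0 ∧ M *ᵥ φ = μ • φ}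

section Spectral
variable {V : Type*} [Fintype V] [DecidableEq V] [Nonempty V]

private lemma inner_toE (M : Matrix V V ℝ) (f : V → ℝ) :
    (inner ℝ (Matrix.toEuclideanLin M ((WithLp.equiv 2 (V → ℝ)).symm f))
      ((WithLp.equiv 2 (V → ℝ)).symm f) : ℝ) = f ⬝ᵥ (M *ᵥ f) := by
  rw [Matrix.toEuclideanLin_apply]
  rw [PiLp.inner_apply]
  simp only [WithLp.equiv_symm_apply, PiLp.toLp_apply, RCLike.inner_apply, conj_trivial]
  rw [dotProduct]

private lemma normsq_toE (f : V → ℝ) :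
    ‖(WithLp.equiv 2 (V → ℝ)).symm f‖ ^ 2 = f ⬝ᵥ f := by
  rw [← real_inner_self_eq_norm_sq, PiLp.inner_apply]
  simp [dotProduct, WithLp.equiv_symm_apply, sq]

lemma lamMax_spec {M : Matrix V V ℝ} (hM : M.IsHermitian) :
    (∃ φ : V → ℝ, φ ≠ 0 ∧ M *ᵥ φ = lamMax M • φ) ∧
      ∀ ψ : V → ℝ, ψ ⬝ᵥ (M *ᵥ ψ) ≤ lamMax M * (ψ ⬝ᵥ ψ) := by
  classical
  have hT : (Matrix.toEuclideanLin M).IsSymmetric :=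
    (Matrix.isHermitian_iff_isSymmetric).mp hM
  set T := Matrix.toEuclideanLin M with hTdef
  haveI : Nontrivial (EuclideanSpace ℝ V) := by
    refine ⟨(WithLp.equiv 2 (V → ℝ)).symm 0, (WithLp.equiv 2 (V → ℝ)).symm 1, ?_⟩
    intro h
    have := (WithLp.equiv 2 (V → ℝ)).symm.injective h
    exact zero_ne_one (congrFun this (Classical.arbitrary V))
  -- the Rayleigh supremum
  set R : ℝ := ⨆ x : { x : EuclideanSpace ℝ V // x ≠ 0 },
      RCLike.re (inner ℝ (T x) (x : EuclideanSpace ℝ V) : ℝ) / ‖(x : EuclideanSpace ℝ V)‖ ^ 2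
    with hR
  have hEV := hT.hasEigenvalue_iSup_of_finiteDimensional
  -- bddAbove of the Rayleigh family
  have hbdd : BddAbove (Set.range fun x : { x : EuclideanSpace ℝ V // x ≠ 0 } =>
      RCLike.re (inner ℝ (T x) (x : EuclideanSpace ℝ V) : ℝ) / ‖(x : EuclideanSpace ℝ V)‖ ^ 2) := by
    refine ⟨‖LinearMap.toContinuousLinearMap T‖, ?_⟩
    rintro _ ⟨⟨x, hx⟩, rfl⟩
    have hxpos : (0:ℝ) < ‖x‖ ^ 2 := pow_pos (norm_pos_iff.mpr hx) 2
    rw [div_le_iff₀ hxpos]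
    calc RCLike.re (inner ℝ (T x) x : ℝ) ≤ ‖T x‖ * ‖x‖ := by
          simpa using real_inner_le_norm (T x) x
      _ ≤ ‖LinearMap.toContinuousLinearMap T‖ * ‖x‖ * ‖x‖ := by
          have := (LinearMap.toContinuousLinearMap T).le_opNorm x
          simpa using mul_le_mul_of_nonneg_right this (norm_nonneg x)
      _ = ‖LinearMap.toContinuousLinearMap T‖ * ‖x‖ ^ 2 := by ring
  -- every vector's Rayleigh quotient is ≤ R
  have F1 : ∀ f : V → ℝ, f ≠ 0 → f ⬝ᵥ (M *ᵥ f) ≤ R * (f ⬝ᵥ f) := by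
    intro f hf
    have hfE : (WithLp.equiv 2 (V → ℝ)).symm f ≠ 0 := by
      simpa using fun h => hf ((WithLp.equiv 2 (V → ℝ)).symm.injective (by simpa using h))
    have h1 := le_ciSup hbdd (⟨(WithLp.equiv 2 (V → ℝ)).symm f, hfE⟩ :
      { x : EuclideanSpace ℝ V // x ≠ 0 })
    rw [← hR] at h1
    have h2 : RCLike.re (inner ℝ (T ((WithLp.equiv 2 (V → ℝ)).symm f))
        ((WithLp.equiv 2 (V → ℝ)).symm f) : ℝ) = f ⬝ᵥ (M *ᵥ f) := by
      simpa [hTdef, Matrix.toEuclideanLin_apply] using inner_toE M f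
    have h3 : ‖(WithLp.equiv 2 (V → ℝ)).symm f‖ ^ 2 = f ⬝ᵥ f := normsq_toE f
    have hpos : (0:ℝ) < f ⬝ᵥ f := by
      rw [← h3]; exact pow_pos (norm_pos_iff.mpr hfE) 2
    rw [h2, h3] at h1
    calc f ⬝ᵥ (M *ᵥ f) = (f ⬝ᵥ (M *ᵥ f) / (f ⬝ᵥ f)) * (f ⬝ᵥ f) := by
          field_simp
      _ ≤ R * (f ⬝ᵥ f) := mul_le_mul_of_nonneg_right h1 hpos.le
  -- R is an eigenvalue, with eigenvector
  obtain ⟨x₀, hx₀⟩ := hEV.exists_hasEigenvector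
  have hx₀ne : x₀ ≠ 0 := hx₀.right
  set f₀ : V → ℝ := WithLp.equiv 2 (V → ℝ) x₀ with hf₀
  have hf₀ne : f₀ ≠ 0 := by
    intro h
    apply hx₀ne
    have : (WithLp.equiv 2 (V → ℝ)).symm f₀ = x₀ := Equiv.symm_apply_apply _ _
    rw [← this, h]; simp
  have heig : M *ᵥ f₀ = R • f₀ := by
    have := hx₀.apply_eq_smul
    have h2 : WithLp.equiv 2 (V → ℝ) (T x₀) = M *ᵥ f₀ := rfl
    rw [this] at h2
    rw [← h2]
    rfl
  -- the eigenvalue set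
  set S := {μ : ℝ | ∃ φ : V → ℝ, φ ≠ 0 ∧ M *ᵥ φ = μ • φ} with hS
  have hRS : R ∈ S := ⟨f₀, hf₀ne, heig⟩
  have hub : ∀ μ ∈ S, μ ≤ R := by
    rintro μ ⟨g, hg, hgeig⟩
    have hpos : (0:ℝ) < g ⬝ᵥ g := by
      rw [← normsq_toE g]
      have : (WithLp.equiv 2 (V → ℝ)).symm g ≠ 0 := by
        simpa using fun h => hg ((WithLp.equiv 2 (V → ℝ)).symm.injective (by simpa using h))
      exact pow_pos (norm_pos_iff.mpr this) 2
    have := F1 g hg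
    rw [hgeig] at this
    have h2 : g ⬝ᵥ (μ • g) = μ * (g ⬝ᵥ g) := by
      simp [dotProduct_smul, smul_eq_mul]
    rw [h2] at this
    exact le_of_mul_le_mul_right this hpos
  have hmax : lamMax M = R := by
    rw [lamMax]
    exact le_antisymm (csSup_le ⟨R, hRS⟩ hub) (le_csSup ⟨R, hub⟩ hRS)
  constructor
  · exact ⟨f₀, hf₀ne, by rw [hmax]; exact heig⟩
  · intro ψ
    by_cases hψ : ψ = 0
    · subst hψ; simp
    · rw [hmax]; exact F1 ψ hψ
end Spectral

lemma tokenGraph_adj {n k : ℕ} (G : SimpleGraph (Fin n))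
    (A B : {s : Finset (Fin n) // s.card = k}) :
    (tokenGraph n k G).Adj A B ↔ A.1 ≠ B.1 ∧ (A.1 ∩ B.1).card = k - 1 ∧
      ∃ u v, G.Adj u v ∧ symmDiff A.1 B.1 = {u, v} := by
  rw [tokenGraph, SimpleGraph.fromRel_adj]
  constructor
  · rintro ⟨hne, h | ⟨h1, u, v, huv, h2⟩⟩
    · exact ⟨Subtype.coe_ne_coe.mpr hne, h⟩
    · exact ⟨Subtype.coe_ne_coe.mpr hne, by rwa [inter_comm], u, v, huv, by rwa [symmDiff_comm]⟩
  · rintro ⟨hne, h⟩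
    exact ⟨Subtype.coe_ne_coe.mp hne, Or.inl h⟩

lemma symmDiff_insert_eq {n : ℕ} (x : Fin n) (s t : Finset (Fin n)) (hs : x ∉ s) (ht : x ∉ t) :
    symmDiff (insert x s) (insert x t) = symmDiff s t := by
  ext a
  simp only [Finset.mem_symmDiff, Finset.mem_insert]
  by_cases hax : a = x
  · subst hax; simp [hs, ht]
  · simp only [hax, false_or]

lemma tokenGraph_adj_insert {n k : ℕ} (hk : 2 ≤ k) (G : SimpleGraph (Fin n)) (x : Fin n)
    (A B : {s : Finset (Fin n) // s.card = k - 1}) (hA : x ∉ A.1) (hB : x ∉ B.1)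
    (hcA : (insert x A.1).card = k) (hcB : (insert x B.1).card = k) :
    (tokenGraph n k G).Adj ⟨insert x A.1, hcA⟩ ⟨insert x B.1, hcB⟩ ↔
      (tokenGraph n (k - 1) G).Adj A B := by
  rw [tokenGraph_adj, tokenGraph_adj]
  have h1 : insert x A.1 ≠ insert x B.1 ↔ A.1 ≠ B.1 := by
    constructor
    · intro h h2; exact h (by rw [h2])
    · intro h h2; apply h; rw [← Finset.erase_insert hA, ← Finset.erase_insert hB, h2]
  have h2 : insert x A.1 ∩ insert x B.1 = insert x (A.1 ∩ B.1) :=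
    (Finset.insert_inter_distrib A.1 B.1 x).symm
  have h3 : x ∉ A.1 ∩ B.1 := fun h => hA (Finset.mem_inter.mp h).1
  have h4 : (insert x A.1 ∩ insert x B.1).card = (A.1 ∩ B.1).card + 1 := by
    rw [h2, Finset.card_insert_of_notMem h3]
  have h5 : symmDiff (insert x A.1) (insert x B.1) = symmDiff A.1 B.1 :=
    symmDiff_insert_eq x A.1 B.1 hA hB
  rw [h1, h4, h5]
  have : (A.1 ∩ B.1).card + 1 = k - 1 ↔ (A.1 ∩ B.1).card = k - 1 - 1 := by omega
  rw [this]

lemma sum_insert_bij {n k : ℕ} (hk1 : 1 ≤ k) (x : Fin n)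
    (g : {s : Finset (Fin n) // s.card = k} → ℝ)
    (g' : {s : Finset (Fin n) // s.card = k - 1} → ℝ)
    (hg0 : ∀ A, x ∉ A.1 → g A = 0)
    (hg0' : ∀ T, x ∈ T.1 → g' T = 0)
    (hgg' : ∀ A (hA : x ∈ A.1) (hc : (A.1.erase x).card = k - 1),
      g A = g' ⟨A.1.erase x, hc⟩) :
    ∑ A, g A = ∑ T, g' T := by
  classical
  have h1 : ∑ A, g A = ∑ A ∈ Finset.univ.filter
      (fun A : {s : Finset (Fin n) // s.card = k} => x ∈ A.1), g A := by
    symm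
    apply Finset.sum_filter_of_ne
    intro A _ hA
    by_contra hc
    exact hA (hg0 A hc)
  have h2 : ∑ T, g' T = ∑ T ∈ Finset.univ.filter
      (fun T : {s : Finset (Fin n) // s.card = k - 1} => x ∉ T.1), g' T := by
    symm
    apply Finset.sum_filter_of_ne
    intro T _ hT
    by_contra hc
    exact hT (hg0' T hc)
  rw [h1, h2]
  refine Finset.sum_bij'
    (fun A hA => ⟨A.1.erase x, by
      rw [Finset.card_erase_of_mem (by simpa using (Finset.mem_filter.mp hA).2), A.2]⟩)
    (fun T hT => ⟨insert x T.1, by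
      rw [Finset.card_insert_of_notMem (by simpa using (Finset.mem_filter.mp hT).2), T.2]
      omega⟩)
    ?_ ?_ ?_ ?_ ?_
  · intro A hA
    simp
  · intro T hT
    simp
  · intro A hA
    exact Subtype.ext (Finset.insert_erase (by simpa using (Finset.mem_filter.mp hA).2))
  · intro T hT
    exact Subtype.ext (Finset.erase_insert (by simpa using (Finset.mem_filter.mp hT).2))
  · intro A hA
    exact hgg' A (by simpa using (Finset.mem_filter.mp hA).2) _

lemma sum_pair_insert_bij {n k : ℕ} (hk1 : 1 ≤ k) (x : Fin n)
    (g : {s : Finset (Fin n) // s.card = k} → {s : Finset (Fin n) // s.card = k} → ℝ)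
    (g' : {s : Finset (Fin n) // s.card = k - 1} → {s : Finset (Fin n) // s.card = k - 1} → ℝ)
    (hg0 : ∀ A B, x ∉ A.1 ∨ x ∉ B.1 → g A B = 0)
    (hgg' : ∀ A B (hA : x ∈ A.1) (hB : x ∈ B.1) (hcA : (A.1.erase x).card = k - 1)
      (hcB : (B.1.erase x).card = k - 1),
      g A B = g' ⟨A.1.erase x, hcA⟩ ⟨B.1.erase x, hcB⟩) :
    ∑ p : {s : Finset (Fin n) // s.card = k} × {s : Finset (Fin n) // s.card = k}, g p.1 p.2 =
      ∑ q ∈ Finset.univ.filter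
        (fun q : {s : Finset (Fin n) // s.card = k - 1} ×
            {s : Finset (Fin n) // s.card = k - 1} => x ∉ q.1.1 ∧ x ∉ q.2.1),
        g' q.1 q.2 := by
  classical
  have h1 : ∑ p : {s : Finset (Fin n) // s.card = k} × {s : Finset (Fin n) // s.card = k},
      g p.1 p.2 = ∑ p ∈ Finset.univ.filter
      (fun p : {s : Finset (Fin n) // s.card = k} × {s : Finset (Fin n) // s.card = k} =>
        x ∈ p.1.1 ∧ x ∈ p.2.1), g p.1 p.2 := by
    symm
    apply Finset.sum_filter_of_ne
    intro p _ hp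
    by_contra hc
    rw [not_and_or] at hc
    exact hp (hg0 p.1 p.2 hc)
  rw [h1]
  refine Finset.sum_bij'
    (fun p hp => (⟨p.1.1.erase x, by
        rw [Finset.card_erase_of_mem ((Finset.mem_filter.mp hp).2.1), p.1.2]⟩,
      ⟨p.2.1.erase x, by
        rw [Finset.card_erase_of_mem ((Finset.mem_filter.mp hp).2.2), p.2.2]⟩))
    (fun q hq => (⟨insert x q.1.1, by
        rw [Finset.card_insert_of_notMem ((Finset.mem_filter.mp hq).2.1), q.1.2]; omega⟩,
      ⟨insert x q.2.1, by
        rw [Finset.card_insert_of_notMem ((Finset.mem_filter.mp hq).2.2), q.2.2]; omega⟩))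
    ?_ ?_ ?_ ?_ ?_
  · intro p hp
    simp
  · intro q hq
    simp
  · intro p hp
    have h := (Finset.mem_filter.mp hp).2
    exact Prod.ext (Subtype.ext (Finset.insert_erase h.1)) (Subtype.ext (Finset.insert_erase h.2))
  · intro q hq
    have h := (Finset.mem_filter.mp hq).2
    exact Prod.ext (Subtype.ext (Finset.erase_insert h.1)) (Subtype.ext (Finset.erase_insert h.2))
  · intro p hp
    have h := (Finset.mem_filter.mp hp).2
    exact hgg' p.1 p.2 h.1 h.2 _ _

set_option maxHeartbeats 1600000 in
/-- `λ_max(L_k(G)) ≤ (k/(k-1)) λ_max(L_{k-1}(G))` for `2 ≤ k ≤ ⌊n/2⌋`. -/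
theorem lamMax_token_step (n k : ℕ) (G : SimpleGraph (Fin n)) (hk : 2 ≤ k) (hkn : k ≤ n / 2) :
    lamMax (lapTok n k G) ≤ ((k : ℝ) / ((k : ℝ) - 1)) * lamMax (lapTok n (k - 1) G) := by
  classical
  have hkn' : k ≤ n := le_trans hkn (Nat.div_le_self n 2)
  haveI hne1 : Nonempty {s : Finset (Fin n) // s.card = k} := by
    obtain ⟨t, _, ht⟩ := Finset.exists_subset_card_eq
      (show k ≤ (Finset.univ : Finset (Fin n)).card by simpa using hkn')
    exact ⟨⟨t, ht⟩⟩
  haveI hne2 : Nonempty {s : Finset (Fin n) // s.card = k - 1} := by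
    obtain ⟨t, _, ht⟩ := Finset.exists_subset_card_eq
      (show k - 1 ≤ (Finset.univ : Finset (Fin n)).card by simp; omega)
    exact ⟨⟨t, ht⟩⟩
  have hHk : (lapTok n k G).IsHermitian :=
    (SimpleGraph.posSemidef_lapMatrix ℝ (tokenGraph n k G)).1
  have hHk' : (lapTok n (k - 1) G).IsHermitian :=
    (SimpleGraph.posSemidef_lapMatrix ℝ (tokenGraph n (k - 1) G)).1
  obtain ⟨⟨φ, hφne, hφeig⟩, -⟩ := lamMax_spec hHk
  obtain ⟨-, hray⟩ := lamMax_spec hHk'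
  set lk := lamMax (lapTok n k G) with hlk
  set lk' := lamMax (lapTok n (k - 1) G) with hlk'
  -- quadratic forms
  have quadk : ∀ f : {s : Finset (Fin n) // s.card = k} → ℝ,
      f ⬝ᵥ (lapTok n k G *ᵥ f) =
      (∑ A, ∑ B, if (tokenGraph n k G).Adj A B then (f A - f B) ^ 2 else 0) / 2 := by
    intro f
    rw [lapTok, ← Matrix.toLinearMap₂'_apply', SimpleGraph.lapMatrix_toLinearMap₂']
  have quadk' : ∀ f : {s : Finset (Fin n) // s.card = k - 1} → ℝ,
      f ⬝ᵥ (lapTok n (k - 1) G *ᵥ f) =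
      (∑ A, ∑ B, if (tokenGraph n (k - 1) G).Adj A B then (f A - f B) ^ 2 else 0) / 2 := by
    intro f
    rw [lapTok, ← Matrix.toLinearMap₂'_apply', SimpleGraph.lapMatrix_toLinearMap₂']
  -- the projected vectors
  have hins : ∀ (x : Fin n) (T : {s : Finset (Fin n) // s.card = k - 1}), x ∉ T.1 →
      (insert x T.1).card = k := by
    intro x T h
    rw [Finset.card_insert_of_notMem h, T.2]
    omega
  set ψ : Fin n → {s : Finset (Fin n) // s.card = k - 1} → ℝ :=
    fun x T => if h : x ∈ T.1 then 0 else φ ⟨insert x T.1, hins x T h⟩ with hψ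
  have hψv : ∀ (x : Fin n) (A : {s : Finset (Fin n) // s.card = k}) (hA : x ∈ A.1)
      (hc : (A.1.erase x).card = k - 1), ψ x ⟨A.1.erase x, hc⟩ = φ A := by
    intro x A hA hc
    rw [hψ]
    simp only
    rw [dif_neg (Finset.notMem_erase x A.1)]
    exact congrArg φ (Subtype.ext (Finset.insert_erase hA))
  -- pair-sum quadratic form of F_k
  set Qk : ℝ := ∑ p : {s : Finset (Fin n) // s.card = k} × {s : Finset (Fin n) // s.card = k},
      (if (tokenGraph n k G).Adj p.1 p.2 then (φ p.1 - φ p.2) ^ 2 else 0) with hQk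
  have ha : Qk = 2 * (lk * (φ ⬝ᵥ φ)) := by
    have h1 : φ ⬝ᵥ (lapTok n k G *ᵥ φ) = lk * (φ ⬝ᵥ φ) := by
      rw [hφeig, dotProduct_smul, smul_eq_mul]
    have h2 := quadk φ
    rw [h1] at h2
    rw [hQk, Fintype.sum_prod_type, h2]
    ring
  -- step b : (k-1) * Qk as a triple sum
  have hb : ((k - 1 : ℕ) : ℝ) * Qk = ∑ x : Fin n,
      ∑ p : {s : Finset (Fin n) // s.card = k} × {s : Finset (Fin n) // s.card = k},
      (if x ∈ p.1.1 ∧ x ∈ p.2.1 ∧ (tokenGraph n k G).Adj p.1 p.2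
        then (φ p.1 - φ p.2) ^ 2 else 0) := by
    rw [Finset.sum_comm, hQk, Finset.mul_sum]
    apply Finset.sum_congr rfl
    intro p _
    by_cases h : (tokenGraph n k G).Adj p.1 p.2
    · simp only [h, if_true, and_true]
      have hcard : (p.1.1 ∩ p.2.1).card = k - 1 := ((tokenGraph_adj G p.1 p.2).mp h).2.1
      have : ∀ x : Fin n, (if x ∈ p.1.1 ∧ x ∈ p.2.1 then (φ p.1 - φ p.2) ^ 2 else 0)
          = (if x ∈ p.1.1 ∩ p.2.1 then (φ p.1 - φ p.2) ^ 2 else 0) := by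
        intro x
        simp [Finset.mem_inter]
      rw [Finset.sum_congr rfl (fun x _ => this x), Fintype.sum_ite_mem,
        Finset.sum_const, hcard, nsmul_eq_mul]
    · simp [h]
  -- step key : per-x inequality
  have key : ∀ x : Fin n,
      (∑ p : {s : Finset (Fin n) // s.card = k} × {s : Finset (Fin n) // s.card = k},
        (if x ∈ p.1.1 ∧ x ∈ p.2.1 ∧ (tokenGraph n k G).Adj p.1 p.2
          then (φ p.1 - φ p.2) ^ 2 else 0))
      ≤ ∑ q : {s : Finset (Fin n) // s.card = k - 1} × {s : Finset (Fin n) // s.card = k - 1},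
        (if (tokenGraph n (k - 1) G).Adj q.1 q.2 then (ψ x q.1 - ψ x q.2) ^ 2 else 0) := by
    intro x
    have heq := sum_pair_insert_bij (by omega : 1 ≤ k) x
      (fun A B => if x ∈ A.1 ∧ x ∈ B.1 ∧ (tokenGraph n k G).Adj A B
        then (φ A - φ B) ^ 2 else 0)
      (fun A' B' => if (tokenGraph n (k - 1) G).Adj A' B' then (ψ x A' - ψ x B') ^ 2 else 0)
      (by
        intro A B h
        exact if_neg (by tauto))
      (by
        intro A B hA hB hcA hcB
        have hxA' : x ∉ A.1.erase x := Finset.notMem_erase x A.1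
        have hxB' : x ∉ B.1.erase x := Finset.notMem_erase x B.1
        have hcA' : (insert x (A.1.erase x)).card = k := hins x ⟨A.1.erase x, hcA⟩ hxA'
        have hcB' : (insert x (B.1.erase x)).card = k := hins x ⟨B.1.erase x, hcB⟩ hxB'
        have hadj := tokenGraph_adj_insert hk G x ⟨A.1.erase x, hcA⟩ ⟨B.1.erase x, hcB⟩
          hxA' hxB' hcA' hcB'
        have heA : (⟨insert x (A.1.erase x), hcA'⟩ : {s : Finset (Fin n) // s.card = k}) = A :=
          Subtype.ext (Finset.insert_erase hA)
        have heB : (⟨insert x (B.1.erase x), hcB'⟩ : {s : Finset (Fin n) // s.card = k}) = B :=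
          Subtype.ext (Finset.insert_erase hB)
        rw [heA, heB] at hadj
        have hcond : (x ∈ A.1 ∧ x ∈ B.1 ∧ (tokenGraph n k G).Adj A B) ↔
            (tokenGraph n (k - 1) G).Adj ⟨A.1.erase x, hcA⟩ ⟨B.1.erase x, hcB⟩ := by
          rw [← hadj]
          constructor
          · tauto
          · intro h
            exact ⟨hA, hB, h⟩
        exact if_congr hcond (by rw [hψv x A hA hcA, hψv x B hB hcB]) rfl)
    refine le_trans (le_of_eq heq) ?_
    refine Finset.sum_le_sum_of_subset_of_nonneg (Finset.filter_subset _ _) ?_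
    intro q _ _
    split
    · positivity
    · exact le_rfl
  -- convert the RHS of key to quadratic form
  have hq' : ∀ x : Fin n,
      (∑ q : {s : Finset (Fin n) // s.card = k - 1} × {s : Finset (Fin n) // s.card = k - 1},
        (if (tokenGraph n (k - 1) G).Adj q.1 q.2 then (ψ x q.1 - ψ x q.2) ^ 2 else 0))
      = 2 * (ψ x ⬝ᵥ (lapTok n (k - 1) G *ᵥ ψ x)) := by
    intro x
    rw [Fintype.sum_prod_type, quadk' (ψ x)]
    ring
  -- step e : total mass
  have c5 : ∑ x : Fin n, (ψ x ⬝ᵥ ψ x) = (k : ℝ) * (φ ⬝ᵥ φ) := by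
    have hpt : ∀ x : Fin n, ψ x ⬝ᵥ ψ x =
        ∑ A : {s : Finset (Fin n) // s.card = k}, (if x ∈ A.1 then φ A * φ A else 0) := by
      intro x
      rw [dotProduct]
      refine (sum_insert_bij (by omega : 1 ≤ k) x
        (fun A => if x ∈ A.1 then φ A * φ A else 0)
        (fun T => ψ x T * ψ x T)
        (by intro A hA; exact if_neg hA)
        (by
          intro T hT
          show ψ x T * ψ x T = 0
          have h0 : ψ x T = 0 := dif_pos hT
          rw [h0, mul_zero])
        (by
          intro A hA hc
          show (if x ∈ A.1 then φ A * φ A else 0) = ψ x ⟨A.1.erase x, hc⟩ * ψ x ⟨A.1.erase x, hc⟩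
          rw [if_pos hA, hψv x A hA hc])).symm
    rw [Finset.sum_congr rfl (fun x _ => hpt x), Finset.sum_comm]
    have hA : ∀ A : {s : Finset (Fin n) // s.card = k},
        ∑ x : Fin n, (if x ∈ A.1 then φ A * φ A else 0) = (k : ℝ) * (φ A * φ A) := by
      intro A
      rw [Fintype.sum_ite_mem, Finset.sum_const, A.2, nsmul_eq_mul]
    rw [Finset.sum_congr rfl (fun A _ => hA A), ← Finset.mul_sum, dotProduct]
  -- positivity of the norm of φ
  have hφpos : 0 < φ ⬝ᵥ φ := by
    rcases Function.ne_iff.mp hφne with ⟨A0, hA0⟩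
    rw [dotProduct]
    refine Finset.sum_pos' (fun A _ => mul_self_nonneg _) ⟨A0, Finset.mem_univ A0, ?_⟩
    have : φ A0 ≠ 0 := by simpa using hA0
    exact mul_self_pos.mpr this
  -- main chained inequality
  have main_ineq : ((k - 1 : ℕ) : ℝ) * (2 * (lk * (φ ⬝ᵥ φ)))
      ≤ 2 * (lk' * ((k : ℝ) * (φ ⬝ᵥ φ))) := by
    calc ((k - 1 : ℕ) : ℝ) * (2 * (lk * (φ ⬝ᵥ φ))) = ((k - 1 : ℕ) : ℝ) * Qk := by rw [ha]
      _ = ∑ x : Fin n,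
          ∑ p : {s : Finset (Fin n) // s.card = k} × {s : Finset (Fin n) // s.card = k},
          (if x ∈ p.1.1 ∧ x ∈ p.2.1 ∧ (tokenGraph n k G).Adj p.1 p.2
            then (φ p.1 - φ p.2) ^ 2 else 0) := hb
      _ ≤ ∑ x : Fin n, 2 * (ψ x ⬝ᵥ (lapTok n (k - 1) G *ᵥ ψ x)) :=
          Finset.sum_le_sum (fun x _ => le_trans (key x) (le_of_eq (hq' x)))
      _ ≤ ∑ x : Fin n, 2 * (lk' * (ψ x ⬝ᵥ ψ x)) := by
          refine Finset.sum_le_sum (fun x _ => ?_)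
          have := hray (ψ x)
          linarith
      _ = 2 * (lk' * ∑ x : Fin n, (ψ x ⬝ᵥ ψ x)) := by
          rw [Finset.mul_sum, Finset.mul_sum]
      _ = 2 * (lk' * ((k : ℝ) * (φ ⬝ᵥ φ))) := by rw [c5]
  -- finish
  have h2 : ((k - 1 : ℕ) : ℝ) = (k : ℝ) - 1 := by
    rw [Nat.cast_sub (by omega : 1 ≤ k)]
    simp
  rw [h2] at main_ineq
  have hk1pos : (0 : ℝ) < (k : ℝ) - 1 := by
    have : (2 : ℝ) ≤ (k : ℝ) := by exact_mod_cast hk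
    linarith
  have h3 : ((k : ℝ) - 1) * lk * (φ ⬝ᵥ φ) ≤ (k : ℝ) * lk' * (φ ⬝ᵥ φ) := by linarith
  have h4 : ((k : ℝ) - 1) * lk ≤ (k : ℝ) * lk' := (mul_le_mul_iff_of_pos_right hφpos).mp h3
  rw [div_mul_eq_mul_div, le_div_iff₀ hk1pos]
  linarith
end
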